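/- arXiv:2408.15393 — 8 statements merged into one kernel-verified Lean document; each statement's English description precedes it below -/
import Mathlib

section
/- Let K ⊂ ℝ be compact. The linear span of the family of Gaussian radial basis functions {x ↦ exp(−a(x − τ)²) : a > 0, τ ∈ ℝ}, restricted to K, is dense in the space C(K, ℝ) of continuous real-valued functions on K equipped with the supremum norm. -/
open scoped Topology

noncomputable def gaussCM (K : Set ℝ) (a τ : ℝ) : C(K, ℝ) :=
  ⟨fun x => Real.exp (-a * ((x : ℝ) - τ) ^ 2), by fun_prop⟩

lemma gauss_mul (K : Set ℝ) {a b : ℝ} (ha : 0 < a) (hb : 0 < b) (τ σ : ℝ) :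
    gaussCM K a τ * gaussCM K b σ =
      Real.exp (-(a * b / (a + b)) * (τ - σ) ^ 2) •
        gaussCM K (a + b) ((a * τ + b * σ) / (a + b)) := by
  have hab : a + b ≠ 0 := by positivity
  ext x
  simp only [gaussCM, ContinuousMap.mul_apply, ContinuousMap.smul_apply,
    ContinuousMap.coe_mk, smul_eq_mul, ← Real.exp_add]
  congr 1
  field_simp
  ring

/-- For compact `K ⊆ ℝ`, the linear span of the Gaussian radial basis
functions `x ↦ exp(−a(x − τ)²)` (`a > 0`, `τ ∈ ℝ`), restricted to `K`, is dense in
`C(K, ℝ)` (uniform convergence on `K`). -/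
theorem stmt_2 (K : Set ℝ) (hK : IsCompact K) :
    Dense (↑(Submodule.span ℝ
      {φ : C(K, ℝ) | ∃ a : ℝ, 0 < a ∧ ∃ τ : ℝ,
        ∀ x : K, φ x = Real.exp (-a * ((x : ℝ) - τ) ^ 2)}) : Set C(K, ℝ)) := by
  haveI : CompactSpace K := isCompact_iff_compactSpace.mp hK
  set S : Set C(K, ℝ) := {φ : C(K, ℝ) | ∃ a : ℝ, 0 < a ∧ ∃ τ : ℝ,
      ∀ x : K, φ x = Real.exp (-a * ((x : ℝ) - τ) ^ 2)} with hS
  -- characterization of elements of S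
  have hmemS : ∀ a τ, 0 < a → gaussCM K a τ ∈ S := by
    intro a τ ha
    exact ⟨a, ha, τ, fun x => rfl⟩
  have hSeq : ∀ φ ∈ S, ∃ a τ, 0 < a ∧ φ = gaussCM K a τ := by
    rintro φ ⟨a, ha, τ, hφ⟩
    exact ⟨a, τ, ha, ContinuousMap.ext fun x => hφ x⟩
  -- span S is closed under multiplication
  have hmul : ∀ f ∈ Submodule.span ℝ S, ∀ g ∈ Submodule.span ℝ S,
      f * g ∈ Submodule.span ℝ S := by
    intro f hf g hg
    have h2 : Submodule.span ℝ S * Submodule.span ℝ S ≤ Submodule.span ℝ S := by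
      rw [Submodule.span_mul_span]
      rw [Submodule.span_le]
      rintro x ⟨p, hp, q, hq, rfl⟩
      obtain ⟨a, τ, ha, rfl⟩ := hSeq p hp
      obtain ⟨b, σ, hb, rfl⟩ := hSeq q hq
      show gaussCM K a τ * gaussCM K b σ ∈ (Submodule.span ℝ S : Set C(K, ℝ))
      rw [gauss_mul K ha hb τ σ]
      exact Submodule.smul_mem _ _ (Submodule.subset_span (hmemS _ _ (by positivity)))
    exact h2 (Submodule.mul_mem_mul hf hg)
  set M : Submodule ℝ C(K, ℝ) := (Submodule.span ℝ S).topologicalClosure with hM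
  -- 1 ∈ M
  have h1 : (1 : C(K, ℝ)) ∈ M := by
    have hF : Continuous fun p : ℝ × K => Real.exp (-p.1 * ((p.2 : ℝ) - 0) ^ 2) := by
      fun_prop
    let G : C(ℝ, C(K, ℝ)) := ContinuousMap.curry ⟨_, hF⟩
    have hG0 : G 0 = 1 := by
      ext x
      simp [G, ContinuousMap.curry]
    have htend : Filter.Tendsto G (𝓝[>] (0 : ℝ)) (𝓝 (1 : C(K, ℝ))) := by
      rw [← hG0]
      exact (G.continuous.tendsto 0).mono_left nhdsWithin_le_nhds
    have hev : ∀ᶠ a in 𝓝[>] (0 : ℝ), G a ∈ (Submodule.span ℝ S : Set C(K, ℝ)) := by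
      filter_upwards [self_mem_nhdsWithin] with a (ha : (0:ℝ) < a)
      have : G a = gaussCM K a 0 := by
        ext x
        simp [G, gaussCM, ContinuousMap.curry]
      rw [this]
      exact Submodule.subset_span (hmemS _ _ ha)
    exact mem_closure_of_tendsto htend hev
  -- adjoin algebra contained in M
  have hadj : (Subalgebra.toSubmodule (Algebra.adjoin ℝ S) : Submodule ℝ C(K, ℝ)) ≤ M := by
    rw [Algebra.adjoin_eq_span, Submodule.span_le]
    intro x hx
    have : x = 1 ∨ x ∈ Submodule.span ℝ S := by
      refine Submonoid.closure_induction (fun y hy => Or.inr (Submodule.subset_span hy))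
        (Or.inl rfl) ?_ hx
      rintro y z _ _ (rfl | hy) (rfl | hz)
      · exact Or.inl (one_mul 1)
      · exact Or.inr (by simpa using hz)
      · exact Or.inr (by simpa using hy)
      · exact Or.inr (hmul y hy z hz)
    rcases this with rfl | hx'
    · exact h1
    · exact (Submodule.span ℝ S).le_topologicalClosure hx'
  -- Stone-Weierstrass
  have hsep : (Algebra.adjoin ℝ S).SeparatesPoints := by
    intro x y hxy
    refine ⟨_, ⟨gaussCM K 1 (x : ℝ), Algebra.subset_adjoin (hmemS 1 (x : ℝ) one_pos), rfl⟩, ?_⟩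
    simp only [gaussCM, ContinuousMap.coe_mk]
    intro h
    rw [Real.exp_eq_exp] at h
    have hxy' : (x : ℝ) ≠ (y : ℝ) := fun h => hxy (Subtype.ext h)
    have h2 : ((y : ℝ) - x) ^ 2 = 0 := by nlinarith [sq_nonneg ((y:ℝ) - (x:ℝ))]
    have h3 : (y : ℝ) - x = 0 := by
      exact pow_eq_zero_iff two_ne_zero |>.mp h2
    exact hxy' (show (x : ℝ) = (y : ℝ) by linarith)
  have hSW := ContinuousMap.subalgebra_topologicalClosure_eq_top_of_separatesPoints
    (Algebra.adjoin ℝ S) hsep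
  -- conclude
  have hclosed : IsClosed (M : Set C(K, ℝ)) := (Submodule.span ℝ S).isClosed_topologicalClosure
  have : (M : Set C(K, ℝ)) = Set.univ := by
    apply Set.eq_univ_of_univ_subset
    have : closure ((Algebra.adjoin ℝ S : Subalgebra ℝ C(K, ℝ)) : Set C(K, ℝ)) = Set.univ := by
      have := congrArg (fun A : Subalgebra ℝ C(K,ℝ) => (A : Set C(K,ℝ))) hSW
      simpa [Subalgebra.topologicalClosure] using this
    calc Set.univ = closure ((Algebra.adjoin ℝ S : Subalgebra ℝ C(K, ℝ)) : Set C(K, ℝ)) := this.symm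
      _ ⊆ closure (M : Set C(K, ℝ)) := closure_mono hadj
      _ = (M : Set C(K, ℝ)) := hclosed.closure_eq
  rw [dense_iff_closure_eq, ← Submodule.topologicalClosure_coe]
  exact this
end

section
/- Let d ≥ 1, let f : ℝ × ℝ^d → ℝ^d be continuous in its first argument and Lipschitz in its second, let t₀ < T, and let u : [t₀, T] → ℝ^d be the (unique) solution of u'(t) = f(t, u(t)), u(t₀) = u₀. Then for every ε > 0 there exist N ∈ ℕ, weights w_{j,k} ∈ ℝ, shape parameters a_j > 0 and centers τ_j ∈ ℝ (j = 1, …, N, k = 1, …, d) such that for every component k, sup_{t ∈ [t₀, T]} | u^{(k)}(t) − u₀^{(k)} − (t − t₀) Σ_{j=1}^{N} w_{j,k} exp(−a_j (t − τ_j)²) | < ε. -/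
open Set

section aux
open Real

private lemma gauss_dense (t₀ T : ℝ) (ht : t₀ < T) (h : ℝ → ℝ)
    (hc : ContinuousOn h (Icc t₀ T)) (ε : ℝ) (hε : 0 < ε) :
    ∃ (N : ℕ) (w a τ : Fin N → ℝ), (∀ j, 0 < a j) ∧
      ∀ t ∈ Icc t₀ T, |h t - ∑ j, w j * Real.exp (-(a j) * (t - τ j)^2)| ≤ ε := by
  set X := Icc t₀ T
  -- the set of (scaled, possibly degenerate) gaussians
  set S : Set C(X, ℝ) :=
    {g | ∃ r a τ : ℝ, 0 ≤ a ∧ ∀ x : X, g x = r * exp (-a * ((x:ℝ) - τ)^2)} with hS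
  -- S is a submonoid
  have one_mem : (1 : C(X, ℝ)) ∈ S := ⟨1, 0, 0, le_refl _, fun x => by simp⟩
  have mul_mem : ∀ {g₁ g₂ : C(X,ℝ)}, g₁ ∈ S → g₂ ∈ S → g₁ * g₂ ∈ S := by
    rintro g₁ g₂ ⟨r, a, τ, ha, hg⟩ ⟨r', a', τ', ha', hg'⟩
    rcases eq_or_lt_of_le (by positivity : (0:ℝ) ≤ a + a') with hz | hpos
    · have haz : a = 0 := by linarith
      have haz' : a' = 0 := by linarith
      exact ⟨r * r', 0, 0, le_refl _, fun x => by
        simp only [ContinuousMap.mul_apply, hg x, hg' x, haz, haz']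
        simp⟩
    · refine ⟨r * r' * exp (-(a*a'/(a+a'))*(τ-τ')^2), a+a', (a*τ+a'*τ')/(a+a'),
        le_of_lt hpos, fun x => ?_⟩
      have hpos' : a + a' ≠ 0 := ne_of_gt hpos
      have key : -a*((x:ℝ)-τ)^2 + -a'*((x:ℝ)-τ')^2
          = (-(a*a'/(a+a'))*(τ-τ')^2) + (-(a+a')*((x:ℝ) - (a*τ+a'*τ')/(a+a'))^2) := by
        field_simp
        ring
      rw [ContinuousMap.mul_apply, hg x, hg' x, mul_mul_mul_comm, ← exp_add, key, exp_add]
      ring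
  set M : Submonoid C(X, ℝ) := { carrier := S, mul_mem' := mul_mem, one_mem' := one_mem }
  set A : Subalgebra ℝ C(X, ℝ) := Algebra.adjoin ℝ S with hA
  have hsep : A.SeparatesPoints := by
    intro x y hxy
    have hg0 : ContinuousMap.mk (fun x : X => exp (-1 * ((x:ℝ) - (t₀-1))^2))
        (by fun_prop) ∈ S := ⟨1, 1, t₀ - 1, zero_le_one, fun x => by simp only [ContinuousMap.coe_mk, one_mul]⟩
    refine ⟨_, ⟨_, Algebra.subset_adjoin hg0, rfl⟩, ?_⟩
    simp only [ContinuousMap.coe_mk]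
    intro hEq
    apply hxy
    have h1 : -1 * ((x:ℝ) - (t₀-1))^2 = -1 * ((y:ℝ) - (t₀-1))^2 := exp_injective hEq
    have h2 : ((x:ℝ) - (t₀-1))^2 = ((y:ℝ) - (t₀-1))^2 := by linarith
    have hx1 : (0:ℝ) < (x:ℝ) - (t₀-1) := by have := x.2.1; simp only [X] at this; linarith
    have hy1 : (0:ℝ) < (y:ℝ) - (t₀-1) := by have := y.2.1; linarith
    have h3 := (sq_eq_sq₀ (le_of_lt hx1) (le_of_lt hy1)).mp h2
    exact Subtype.ext (by linarith)
  have hdense := ContinuousMap.subalgebra_topologicalClosure_eq_top_of_separatesPoints A hsep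
  set H : C(X, ℝ) := ⟨X.restrict h, hc.restrict⟩ with hH
  have hHmem : H ∈ closure (A : Set C(X, ℝ)) := by
    have : H ∈ A.topologicalClosure := by rw [hdense]; trivial
    exact this
  obtain ⟨p, hpA, hp⟩ := Metric.mem_closure_iff.mp hHmem (ε/2) (by positivity)
  have hspan : p ∈ Submodule.span ℝ S := by
    have h1 : p ∈ Subalgebra.toSubmodule A := hpA
    rw [hA, Algebra.adjoin_eq_span] at h1
    have h2 : Submonoid.closure S = M := Submonoid.closure_eq M
    rwa [h2] at h1
  have key : ∀ q, q ∈ Submodule.span ℝ S → ∀ δ : ℝ, 0 < δ →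
      ∃ (N : ℕ) (w a τ : Fin N → ℝ), (∀ j, 0 < a j) ∧
        ∀ x : X, |q x - ∑ j, w j * exp (-(a j) * ((x:ℝ) - τ j)^2)| ≤ δ := by
    intro q hq
    induction hq using Submodule.span_induction with
    | mem g hg =>
      obtain ⟨r, a, τ, ha, hg⟩ := hg
      intro δ hδ
      rcases eq_or_lt_of_le ha with haz | hapos
      · -- degenerate gaussian: a constant, approximate by a flat gaussian
        set a₁ : ℝ := δ / (|r| * (T - t₀)^2 + 1) with ha₁
        have ha₁pos : 0 < a₁ := by positivity
        refine ⟨1, ![r], ![a₁], ![t₀], fun j => by simpa using ha₁pos, fun x => ?_⟩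
        have hx0 : t₀ ≤ (x:ℝ) := x.2.1
        have hxT : (x:ℝ) ≤ T := x.2.2
        have hgx : g x = r := by rw [hg x, ← haz]; simp
        set s : ℝ := ((x:ℝ) - t₀)^2 with hs
        have hs0 : 0 ≤ s := sq_nonneg _
        have hsM : s ≤ (T - t₀)^2 := by
          apply pow_le_pow_left₀ (by linarith) (by linarith)
        have he1 : exp (-a₁ * s) ≤ 1 := exp_le_one_iff.mpr (by nlinarith)
        have he2 : 1 - a₁ * s ≤ exp (-a₁ * s) := by
          have := add_one_le_exp (-a₁ * s); linarith
        have hsum : ∑ j : Fin 1, ![r] j * exp (-(![a₁] j) * ((x:ℝ) - ![t₀] j)^2)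
            = r * exp (-a₁ * s) := by simp [hs]
        rw [hgx, hsum]
        have habs : |r - r * exp (-a₁ * s)| = |r| * (1 - exp (-a₁ * s)) := by
          rw [← mul_one_sub r, abs_mul,
            abs_of_nonneg (show (0:ℝ) ≤ 1 - exp (-a₁ * s) by linarith)]
        rw [habs]
        have hb : |r| * (1 - exp (-a₁ * s)) ≤ |r| * (a₁ * s) := by
          apply mul_le_mul_of_nonneg_left (by linarith) (abs_nonneg r)
        have hb2 : |r| * (a₁ * s) ≤ |r| * (T - t₀)^2 * a₁ := by
          rw [mul_assoc]
          apply mul_le_mul_of_nonneg_left _ (abs_nonneg r)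
          rw [mul_comm]
          exact mul_le_mul_of_nonneg_right hsM (le_of_lt ha₁pos)
        have hb3 : |r| * (T - t₀)^2 * a₁ ≤ δ := by
          rw [ha₁, mul_div_assoc']
          rw [div_le_iff₀ (by positivity)]
          nlinarith [abs_nonneg r, sq_nonneg (T - t₀)]
        linarith
      · refine ⟨1, ![r], ![a], ![τ], fun j => by simpa using hapos, fun x => ?_⟩
        rw [hg x]
        simp
        linarith
    | zero =>
      intro δ hδ
      exact ⟨0, Fin.elim0, Fin.elim0, Fin.elim0, fun j => j.elim0, fun x => by simp; linarith⟩
    | add p q hpm hqm ihp ihq =>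
      intro δ hδ
      obtain ⟨N₁, w₁, a₁, τ₁, hpos₁, hb₁⟩ := ihp (δ/2) (by positivity)
      obtain ⟨N₂, w₂, a₂, τ₂, hpos₂, hb₂⟩ := ihq (δ/2) (by positivity)
      refine ⟨N₁ + N₂, Fin.append w₁ w₂, Fin.append a₁ a₂, Fin.append τ₁ τ₂, ?_, fun x => ?_⟩
      · intro j
        induction j using Fin.addCases with
        | left i => rw [Fin.append_left]; exact hpos₁ i
        | right i => rw [Fin.append_right]; exact hpos₂ i
      · have hsum : ∑ j : Fin (N₁ + N₂), Fin.append w₁ w₂ j *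
              exp (-(Fin.append a₁ a₂ j) * ((x:ℝ) - Fin.append τ₁ τ₂ j)^2)
            = (∑ j : Fin N₁, w₁ j * exp (-(a₁ j) * ((x:ℝ) - τ₁ j)^2))
              + ∑ j : Fin N₂, w₂ j * exp (-(a₂ j) * ((x:ℝ) - τ₂ j)^2) := by
          rw [Fin.sum_univ_add]
          simp [Fin.append_left, Fin.append_right]
        rw [hsum, ContinuousMap.add_apply]
        have := hb₁ x
        have := hb₂ x
        have harr : p x + q x - ((∑ j : Fin N₁, w₁ j * exp (-(a₁ j) * ((x:ℝ) - τ₁ j)^2))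
              + ∑ j : Fin N₂, w₂ j * exp (-(a₂ j) * ((x:ℝ) - τ₂ j)^2))
            = (p x - ∑ j : Fin N₁, w₁ j * exp (-(a₁ j) * ((x:ℝ) - τ₁ j)^2))
              + (q x - ∑ j : Fin N₂, w₂ j * exp (-(a₂ j) * ((x:ℝ) - τ₂ j)^2)) := by ring
        rw [harr]
        calc |_ + _| ≤ _ + _ := abs_add_le _ _
          _ ≤ δ/2 + δ/2 := add_le_add (hb₁ x) (hb₂ x)
          _ = δ := by ring
    | smul c p hpm ihp =>
      intro δ hδ
      obtain ⟨N, w, a, τ, hpos, hb⟩ := ihp (δ / (|c| + 1)) (by positivity)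
      refine ⟨N, fun j => c * w j, a, τ, hpos, fun x => ?_⟩
      have : ∑ j : Fin N, c * w j * exp (-(a j) * ((x:ℝ) - τ j)^2)
          = c * ∑ j : Fin N, w j * exp (-(a j) * ((x:ℝ) - τ j)^2) := by
        rw [Finset.mul_sum]; congr 1; funext j; ring
      rw [this, ContinuousMap.smul_apply, smul_eq_mul, ← mul_sub, abs_mul]
      calc |c| * |p x - _| ≤ |c| * (δ / (|c| + 1)) :=
            mul_le_mul_of_nonneg_left (hb x) (abs_nonneg c)
        _ ≤ δ := by
            rw [mul_div_assoc']
            rw [div_le_iff₀ (by positivity)]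
            nlinarith [abs_nonneg c]
  obtain ⟨N, w, a, τ, hapos, hbound⟩ := key p hspan (ε/2) (by positivity)
  refine ⟨N, w, a, τ, hapos, fun t htmem => ?_⟩
  have h1 : |h t - p ⟨t, htmem⟩| < ε/2 := by
    have := ContinuousMap.dist_apply_le_dist (f := H) (g := p) ⟨t, htmem⟩
    rw [Real.dist_eq] at this
    calc |h t - p ⟨t, htmem⟩| = dist (H ⟨t, htmem⟩) (p ⟨t, htmem⟩) := by
          rw [Real.dist_eq]; rfl
      _ ≤ dist H p := ContinuousMap.dist_apply_le_dist _
      _ < ε/2 := hp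
  have h2 := hbound ⟨t, htmem⟩
  calc |h t - ∑ j, w j * exp (-(a j) * (t - τ j)^2)|
      ≤ |h t - p ⟨t, htmem⟩| + |p ⟨t, htmem⟩ - ∑ j, w j * exp (-(a j) * (t - τ j)^2)| := by
        apply abs_sub_le
    _ ≤ ε/2 + ε/2 := by exact add_le_add (le_of_lt h1) h2
    _ = ε := by ring

private lemma ratio_cont (d : ℕ) (t₀ T : ℝ)
    (u : ℝ → EuclideanSpace ℝ (Fin d)) (u₀ v : EuclideanSpace ℝ (Fin d))
    (hu : ∀ t ∈ Set.Icc t₀ T, ContinuousWithinAt u (Set.Icc t₀ T) t)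
    (hder : HasDerivWithinAt u v (Set.Icc t₀ T) t₀)
    (hu0 : u t₀ = u₀) (k : Fin d) :
    ContinuousOn (fun t => if t = t₀ then v k else (u t k - u₀ k) / (t - t₀)) (Icc t₀ T) := by
  set F : ℝ → ℝ := fun t => if t = t₀ then v k else (u t k - u₀ k) / (t - t₀) with hF
  intro t htm
  rcases eq_or_ne t t₀ with heq | htne
  · rw [heq]
    rw [← continuousWithinAt_diff_self]
    have hslope : Filter.Tendsto (slope u t₀) (nhdsWithin t₀ (Icc t₀ T \ {t₀})) (nhds v) :=
      hasDerivWithinAt_iff_tendsto_slope.mp hder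
    have hev : Filter.Tendsto (fun s => slope u t₀ s k)
        (nhdsWithin t₀ (Icc t₀ T \ {t₀})) (nhds (v k)) :=
      ((PiLp.continuous_apply 2 _ k).tendsto v).comp hslope
    have heq : ∀ s ∈ Icc t₀ T \ {t₀}, slope u t₀ s k = F s := by
      intro s hs
      have hsne : s ≠ t₀ := hs.2
      have : slope u t₀ s k = (s - t₀)⁻¹ * (u s k - u t₀ k) := by
        simp [slope, vsub_eq_sub]
      rw [this, hF]
      simp only [if_neg hsne, hu0]
      rw [div_eq_inv_mul]
    have : ContinuousWithinAt F (Icc t₀ T \ {t₀}) t₀ := by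
      unfold ContinuousWithinAt
      have hFt₀ : F t₀ = v k := by simp [hF]
      rw [hFt₀]
      apply hev.congr'
      filter_upwards [self_mem_nhdsWithin] with s hs using heq s hs
    exact this
  · have hratio : ContinuousWithinAt (fun s => (u s k - u₀ k) / (s - t₀)) (Icc t₀ T) t := by
      apply ContinuousWithinAt.div
      · exact (((PiLp.continuous_apply 2 _ k).tendsto _).comp (hu t htm)).sub tendsto_const_nhds
      · exact (continuous_id.sub continuous_const).continuousWithinAt
      · exact sub_ne_zero_of_ne htne
    apply hratio.congr_of_eventuallyEq
    · filter_upwards [eventually_ne_nhdsWithin htne] with s hs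
      simp [hF, if_neg hs]
    · simp [hF, if_neg htne]

end aux

/-- The PI-RPNN ansatz
`û⁽ᵏ⁾(t) = u₀⁽ᵏ⁾ + (t − t₀) Σⱼ w_{j,k} exp(−aⱼ(t − τⱼ)²)` can approximate the solution
of the IVP `u' = f(t,u)`, `u(t₀) = u₀` uniformly on `[t₀, T]` to any accuracy `ε > 0`. -/
theorem stmt_3 (d : ℕ) (hd : 1 ≤ d)
    (f : ℝ → EuclideanSpace ℝ (Fin d) → EuclideanSpace ℝ (Fin d))
    (hf_cont : ∀ y, Continuous fun t => f t y)
    (L : NNReal) (hf_lip : ∀ t, LipschitzWith L (f t))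
    (t₀ T : ℝ) (ht : t₀ < T)
    (u : ℝ → EuclideanSpace ℝ (Fin d)) (u₀ : EuclideanSpace ℝ (Fin d))
    (hu : ∀ t ∈ Set.Icc t₀ T, HasDerivWithinAt u (f t (u t)) (Set.Icc t₀ T) t)
    (hu0 : u t₀ = u₀) :
    ∀ ε > (0:ℝ), ∃ (N : ℕ) (w : Fin N → Fin d → ℝ) (a : Fin N → ℝ) (τ : Fin N → ℝ),
      (∀ j, 0 < a j) ∧
      ∀ k : Fin d, ∀ t ∈ Set.Icc t₀ T,
        |u t k - u₀ k -
          (t - t₀) * ∑ j : Fin N, w j k * Real.exp (-(a j) * (t - τ j) ^ 2)| < ε := by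
  classical
  intro ε hε
  have hTt : (0:ℝ) < T - t₀ := by linarith
  have hucont : ∀ t ∈ Icc t₀ T, ContinuousWithinAt u (Icc t₀ T) t :=
    fun t htm => (hu t htm).continuousWithinAt
  have hder : HasDerivWithinAt u (f t₀ (u t₀)) (Icc t₀ T) t₀ :=
    hu t₀ ⟨le_refl _, le_of_lt ht⟩
  have hk : ∀ k : Fin d, ∃ (N : ℕ) (w a τ : Fin N → ℝ), (∀ j, 0 < a j) ∧
      ∀ t ∈ Icc t₀ T,
        |u t k - u₀ k - (t - t₀) * ∑ j, w j * Real.exp (-(a j) * (t - τ j) ^ 2)| ≤ ε/2 := by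
    intro k
    have hcF := ratio_cont d t₀ T u u₀ (f t₀ (u t₀)) hucont hder hu0 k
    obtain ⟨N, w, a, τ, hpos, hb⟩ :=
      gauss_dense t₀ T ht _ hcF (ε/(2*(T-t₀))) (by positivity)
    refine ⟨N, w, a, τ, hpos, fun t htm => ?_⟩
    have hid : u t k - u₀ k
        = (t - t₀) * (if t = t₀ then f t₀ (u t₀) k else (u t k - u₀ k)/(t - t₀)) := by
      rcases eq_or_ne t t₀ with rfl | hne
      · simp [hu0]
      · rw [if_neg hne]; field_simp
    rw [hid, ← mul_sub, abs_mul]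
    have h1 : |t - t₀| ≤ T - t₀ := by
      rw [abs_of_nonneg (by linarith [htm.1])]; linarith [htm.2]
    calc |t - t₀| * |_| ≤ (T - t₀) * (ε/(2*(T-t₀))) :=
          mul_le_mul h1 (hb t htm) (abs_nonneg _) (by linarith)
      _ = ε/2 := by field_simp
  choose N w' a' τ' hpos hbound using hk
  set ι := (Σ k : Fin d, Fin (N k)) with hι
  set e : Fin (Fintype.card ι) ≃ ι := (Fintype.equivFin ι).symm with he
  refine ⟨Fintype.card ι,
    fun i k => if (e i).1 = k then w' (e i).1 (e i).2 else 0,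
    fun i => a' (e i).1 (e i).2,
    fun i => τ' (e i).1 (e i).2,
    fun i => hpos _ _, fun k t htm => ?_⟩
  have hsum : (∑ i : Fin (Fintype.card ι),
      (if (e i).1 = k then w' (e i).1 (e i).2 else 0) *
        Real.exp (-(a' (e i).1 (e i).2) * (t - τ' (e i).1 (e i).2) ^ 2))
      = ∑ j, w' k j * Real.exp (-(a' k j) * (t - τ' k j) ^ 2) := by
    rw [Equiv.sum_comp e (fun x : ι =>
      (if x.1 = k then w' x.1 x.2 else 0) * Real.exp (-(a' x.1 x.2) * (t - τ' x.1 x.2) ^ 2))]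
    rw [← Finset.univ_sigma_univ, Finset.sum_sigma]
    have hinner : ∀ k' : Fin d,
        (∑ j : Fin (N k'), (if k' = k then w' k' j else 0) *
          Real.exp (-(a' k' j) * (t - τ' k' j) ^ 2))
        = if k' = k then (∑ j, w' k j * Real.exp (-(a' k j) * (t - τ' k j) ^ 2)) else 0 := by
      intro k'
      rcases eq_or_ne k' k with rfl | hne
      · simp
      · simp [hne]
    rw [Finset.sum_congr rfl (fun k' _ => hinner k')]
    rw [Finset.sum_ite_eq' Finset.univ k]
    simp
  rw [hsum]
  calc |u t k - u₀ k - (t - t₀) * ∑ j, w' k j * Real.exp (-(a' k j) * (t - τ' k j) ^ 2)|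
      ≤ ε/2 := hbound k t htm
    _ < ε := by linarith
end

section
/- Let M ≥ 1 be an integer, s > 0 and ζ ∈ (0, 1]. Define D = (1/3)(1 + 3/(2M) + 1/(2M²)) + s(1 + 1/M) + s² and S = 1 − ζ·( ½(1 + 1/M) + s ) / D. Then D > 0 and −1 < S < 1. -/
/-- For integer `M ≥ 1`, `s > 0`, `ζ ∈ (0,1]`, the denominator
`D = (1/3)(1 + 3/(2M) + 1/(2M²)) + s(1 + 1/M) + s²` is positive and the limiting
stability index `S = 1 − ζ(½(1 + 1/M) + s)/D` satisfies `−1 < S < 1`. -/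
theorem stmt_9 (M : ℕ) (hM : 1 ≤ M) (s : ℝ) (hs : 0 < s)
    (ζ : ℝ) (hζ : ζ ∈ Set.Ioc (0:ℝ) 1) :
    let D : ℝ := (1/3) * (1 + 3 / (2 * (M : ℝ)) + 1 / (2 * (M : ℝ) ^ 2))
        + s * (1 + 1 / (M : ℝ)) + s ^ 2
    let S : ℝ := 1 - ζ * ((1/2) * (1 + 1 / (M : ℝ)) + s) / D
    0 < D ∧ -1 < S ∧ S < 1 := by
  intro D S
  obtain ⟨hζ0, hζ1⟩ := hζ
  have hm : (1:ℝ) ≤ (M:ℝ) := by exact_mod_cast hM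
  have hm0 : (0:ℝ) < (M:ℝ) := by linarith
  set a : ℝ := 1 / (M:ℝ) with ha
  have ha0 : 0 < a := by positivity
  have ha1 : a ≤ 1 := by
    rw [ha]; rw [div_le_one hm0]; exact hm
  have hD : D = 1/3 + (1/2)*a + (1/6)*a^2 + s*(1+a) + s^2 := by
    show (1/3) * (1 + 3 / (2 * (M : ℝ)) + 1 / (2 * (M : ℝ) ^ 2))
        + s * (1 + 1 / (M : ℝ)) + s ^ 2 = _
    rw [ha]
    field_simp
    ring
  have hDpos : 0 < D := by rw [hD]; nlinarith
  have hN : (1/2) * (1 + 1 / (M : ℝ)) + s = (1/2)*(1+a) + s := by rw [ha]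
  refine ⟨hDpos, ?_, ?_⟩
  · show -1 < 1 - ζ * ((1/2) * (1 + 1 / (M : ℝ)) + s) / D
    rw [hN]
    have hNpos : 0 < (1/2)*(1+a) + s := by nlinarith
    have key : ζ * ((1/2)*(1+a) + s) < 2 * D := by
      have h1 : ζ * ((1/2)*(1+a) + s) ≤ (1/2)*(1+a) + s := by nlinarith
      have h2 : (1/2)*(1+a) + s < 2 * D := by rw [hD]; nlinarith
      linarith
    have := (div_lt_iff₀ hDpos).mpr (by linarith [key] : ζ * ((1/2)*(1+a) + s) < 2 * D)
    linarith [(div_lt_iff₀ hDpos).mpr key]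
  · show 1 - ζ * ((1/2) * (1 + 1 / (M : ℝ)) + s) / D < 1
    rw [hN]
    have : 0 < ζ * ((1/2)*(1+a) + s) / D := by
      apply div_pos _ hDpos
      apply mul_pos hζ0
      nlinarith
    linarith
end

section
/- Let M ≥ 1 be an integer and z > 0 with 1/z > ½(1 + 1/M). Define D = (1/3)(1 + 3/(2M) + 1/(2M²)) − (1/z)(1 + 1/M) + 1/z² and S_M = 1 − ( ½(1 + 1/M) − 1/z ) / D. Then D > 0 and S_M > 1. -/
/-- For integer `M ≥ 1` and `z > 0` with `1/z > ½(1 + 1/M)`, the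
denominator `D = (1/3)(1 + 3/(2M) + 1/(2M²)) − (1/z)(1 + 1/M) + 1/z²` is positive and
the limiting stability index at the last collocation point,
`S_M = 1 − (½(1 + 1/M) − 1/z)/D`, satisfies `S_M > 1` (instability for `λ > 0`). -/
theorem stmt_10 (M : ℕ) (hM : 1 ≤ M) (z : ℝ) (hz : 0 < z)
    (hzM : (1/2) * (1 + 1 / (M : ℝ)) < 1 / z) :
    let D : ℝ := (1/3) * (1 + 3 / (2 * (M : ℝ)) + 1 / (2 * (M : ℝ) ^ 2))
        - (1 / z) * (1 + 1 / (M : ℝ)) + 1 / z ^ 2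
    let S : ℝ := 1 - ((1/2) * (1 + 1 / (M : ℝ)) - 1 / z) / D
    0 < D ∧ 1 < S := by
  intro D S
  have hMpos : (0:ℝ) < M := by exact_mod_cast Nat.lt_of_lt_of_le Nat.zero_lt_one hM
  have hm1 : 1 / (M : ℝ) ≤ 1 := by
    rw [div_le_one hMpos]; exact_mod_cast hM
  have hm0 : 0 < 1 / (M : ℝ) := by positivity
  have h1 : 3 / (2 * (M : ℝ)) = (3/2) * (1 / (M : ℝ)) := by field_simp
  have h2 : 1 / (2 * (M : ℝ) ^ 2) = (1 / (M : ℝ))^2 / 2 := by field_simp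
  have h3 : 1 / z ^ 2 = (1 / z)^2 := by field_simp
  have hD : 0 < D := by
    show (0:ℝ) < (1/3) * (1 + 3 / (2 * (M : ℝ)) + 1 / (2 * (M : ℝ) ^ 2)) - (1 / z) * (1 + 1 / (M : ℝ)) + 1 / z ^ 2
    rw [h1, h2, h3]
    nlinarith [sq_nonneg (1/z - (1 + 1/(M:ℝ))/2), sq_nonneg (1/(M:ℝ)), hm0, hm1,
      mul_pos hm0 hm0]
  refine ⟨hD, ?_⟩
  have hnum : (1/2) * (1 + 1 / (M : ℝ)) - 1 / z < 0 := by linarith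
  have : ((1/2) * (1 + 1 / (M : ℝ)) - 1 / z) / D < 0 := div_neg_of_neg_of_pos hnum hD
  show (1:ℝ) < 1 - ((1/2) * (1 + 1 / (M : ℝ)) - 1 / z) / D
  linarith
end

section
/- Let N, M ≥ 1 and z < 0. Let Ψ⁰ ∈ ℝ^{N×M} have entries ψ⁰_{ji} = 1 − z·(i/M), and for i ∈ {1,…,M} set ζ_i = i/M. Then lim_{δ → 0⁺} [ 1 + z ζ_i 𝟏_Nᵀ (Ψ⁰(Ψ⁰)ᵀ + δ I_N)^{−1} Ψ⁰ 𝟏_M ] = 1 − ζ_i · ( ½(1 + 1/M) − 1/z ) / ( (1/3)(1 + 3/(2M) + 1/(2M²)) − (1/z)(1 + 1/M) + 1/z² ). -/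
open Matrix Filter

private lemma stmt12_sum_one (n : ℕ) :
    ∑ k ∈ Finset.range n, ((k : ℝ) + 1) = n * (n + 1) / 2 := by
  induction n with
  | zero => simp
  | succ n ih => rw [Finset.sum_range_succ, ih]; push_cast; ring

private lemma stmt12_sum_sq (n : ℕ) :
    ∑ k ∈ Finset.range n, ((k : ℝ) + 1) ^ 2 = (n:ℝ) * ((n:ℝ) + 1) * (2 * (n:ℝ) + 1) / 6 := by
  induction n with
  | zero => simp
  | succ n ih => rw [Finset.sum_range_succ, ih]; push_cast; ring


/-- For `z < 0`, `Ψ⁰ ∈ ℝ^{N×M}` with entries `1 − z(i/M)` and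
`ζᵢ = i/M`, the zeroth-order stability index with ridge parameter `δ` satisfies
`lim_{δ→0⁺} [1 + zζᵢ𝟏ᵀ(Ψ⁰(Ψ⁰)ᵀ + δI)⁻¹Ψ⁰𝟏]
  = 1 − ζᵢ(½(1 + 1/M) − 1/z)/((1/3)(1 + 3/(2M) + 1/(2M²)) − (1/z)(1 + 1/M) + 1/z²)`. -/
theorem stmt_12 (N M : ℕ) (hN : 1 ≤ N) (hM : 1 ≤ M) (z : ℝ) (hz : z < 0) (i : Fin M) :
    let ζ : Fin M → ℝ := fun i' => ((i' : ℕ) + 1 : ℝ) / (M : ℝ)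
    let Ψ0 : Matrix (Fin N) (Fin M) ℝ := Matrix.of fun _ i' => 1 - z * ζ i'
    Tendsto (fun δ : ℝ =>
        1 + z * ζ i * ((fun _ => (1:ℝ)) ⬝ᵥ
          ((Ψ0 * Ψ0ᵀ + δ • (1 : Matrix (Fin N) (Fin N) ℝ))⁻¹).mulVec
            (Ψ0.mulVec (fun _ => 1))))
      (nhdsWithin 0 (Set.Ioi 0))
      (nhds (1 - ζ i * ((1/2) * (1 + 1 / (M : ℝ)) - 1 / z) /
        ((1/3) * (1 + 3 / (2 * (M : ℝ)) + 1 / (2 * (M : ℝ) ^ 2))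
          - (1 / z) * (1 + 1 / (M : ℝ)) + 1 / z ^ 2))) := by
  intro ζ Ψ0
  have hζdef : ζ = fun i' : Fin M => (((i' : ℕ) : ℝ) + 1) / (M : ℝ) := rfl
  have hΨdef : Ψ0 = Matrix.of fun _ i' => 1 - z * ζ i' := rfl
  have hM0 : (0:ℝ) < M := by exact_mod_cast hM
  have hN0 : (0:ℝ) < N := by exact_mod_cast hN
  have hMne : (M:ℝ) ≠ 0 := ne_of_gt hM0
  have hNne : (N:ℝ) ≠ 0 := ne_of_gt hN0
  have hzne : z ≠ 0 := ne_of_lt hz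
  -- basic positivity of the entries
  have hvpos : ∀ i' : Fin M, 0 < 1 - z * ζ i' := by
    intro i'
    have hζ : 0 < ζ i' := by
      rw [hζdef]; exact div_pos (by positivity) hM0
    nlinarith
  set s : ℝ := ∑ i' : Fin M, (1 - z * ζ i') with hs_def
  set c : ℝ := ∑ i' : Fin M, (1 - z * ζ i') ^ 2 with hc_def
  have hcpos : 0 < c := by
    rw [hc_def]
    exact Finset.sum_pos (fun i' _ => pow_pos (hvpos i') 2) ⟨i, Finset.mem_univ i⟩
  -- closed forms for s and c
  have hs : s = (M:ℝ) - z * ((M:ℝ) + 1) / 2 := by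
    rw [hs_def, hζdef]
    rw [Fin.sum_univ_eq_sum_range (fun k : ℕ => 1 - z * (((k:ℝ) + 1) / M))]
    have h1 : ∀ k : ℕ, 1 - z * (((k:ℝ) + 1) / M) = 1 - (z / M) * ((k:ℝ) + 1) := by
      intro k; ring
    simp only [h1]
    rw [Finset.sum_sub_distrib, ← Finset.mul_sum, stmt12_sum_one, Finset.sum_const,
      Finset.card_range, nsmul_eq_mul, mul_one]
    field_simp
  have hc : c = (M:ℝ) - z * ((M:ℝ) + 1) + z^2 * ((M:ℝ) + 1) * (2*(M:ℝ) + 1) / (6 * M) := by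
    rw [hc_def, hζdef]
    rw [Fin.sum_univ_eq_sum_range (fun k : ℕ => (1 - z * (((k:ℝ) + 1) / M)) ^ 2)]
    have h1 : ∀ k : ℕ, (1 - z * (((k:ℝ) + 1) / M)) ^ 2
        = 1 - (2 * z / M) * ((k:ℝ) + 1) + (z / M)^2 * ((k:ℝ) + 1)^2 := by
      intro k; field_simp; ring
    simp only [h1]
    rw [Finset.sum_add_distrib, Finset.sum_sub_distrib, ← Finset.mul_sum, ← Finset.mul_sum,
      stmt12_sum_one, stmt12_sum_sq, Finset.sum_const, Finset.card_range, nsmul_eq_mul, mul_one]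
    field_simp
  -- the Gram matrix is constant
  have hΨΨ : Ψ0 * Ψ0ᵀ = Matrix.of (fun _ _ : Fin N => c) := by
    ext j k
    rw [Matrix.mul_apply]
    simp only [hΨdef, Matrix.transpose_apply, Matrix.of_apply, hc_def]
    exact Finset.sum_congr rfl (fun i' _ => (sq (1 - z * ζ i')).symm ▸ (by ring)
      )
  -- explicit inverse for δ > 0
  have hinv : ∀ δ : ℝ, 0 < δ →
      (Ψ0 * Ψ0ᵀ + δ • (1 : Matrix (Fin N) (Fin N) ℝ))⁻¹
        = Matrix.of (fun j k : Fin N => (if j = k then (1:ℝ) else 0)/δ - c/(δ*(c*N+δ))) := by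
    intro δ hδ
    have hδne : δ ≠ 0 := ne_of_gt hδ
    have hden : c*N + δ ≠ 0 := by positivity
    rw [hΨΨ]
    apply Matrix.inv_eq_right_inv
    ext j l
    simp only [Matrix.mul_apply, Matrix.add_apply, Matrix.smul_apply, Matrix.of_apply,
      Matrix.one_apply, smul_eq_mul, mul_ite, mul_one, mul_zero, mul_sub, add_mul, sub_mul,
      ite_mul, zero_mul, div_eq_mul_inv, Finset.sum_sub_distrib, Finset.sum_add_distrib,
      Finset.sum_ite_eq, Finset.sum_ite_eq', Finset.mem_univ, if_true,
      Finset.sum_const, Finset.card_univ, Fintype.card_fin, nsmul_eq_mul]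
    by_cases h : j = l
    · simp [h]; field_simp; ring
    · simp [h]; field_simp; ring
  -- Ψ0 applied to the all-ones vector
  have hΨ1 : Ψ0.mulVec (fun _ => (1:ℝ)) = fun _ => s := by
    funext j
    simp only [Matrix.mulVec, dotProduct, hΨdef, Matrix.of_apply, mul_one, hs_def]
  -- the full expression for δ > 0
  have heq : ∀ δ : ℝ, δ ∈ Set.Ioi (0:ℝ) →
      (1 + z * ζ i * ((fun _ => (1:ℝ)) ⬝ᵥ
          ((Ψ0 * Ψ0ᵀ + δ • (1 : Matrix (Fin N) (Fin N) ℝ))⁻¹).mulVec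
            (Ψ0.mulVec (fun _ => 1))))
        = 1 + z * ζ i * ((N:ℝ) * (s / (c*N + δ))) := by
    intro δ hδ
    rw [Set.mem_Ioi] at hδ
    have hδne : δ ≠ 0 := ne_of_gt hδ
    have hden : c*N + δ ≠ 0 := by positivity
    rw [hinv δ hδ, hΨ1]
    have hmv : (Matrix.of (fun j k : Fin N => (if j = k then (1:ℝ) else 0)/δ - c/(δ*(c*N+δ)))).mulVec
        (fun _ => s) = fun _ => s / (c*N + δ) := by
      funext j
      have hterm : ∀ k : Fin N, ((if j = k then (1:ℝ) else 0)/δ - c/(δ*(c*N+δ))) * s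
          = (if j = k then s/δ else 0) - c*s/(δ*(c*N+δ)) := by
        intro k; split <;> field_simp <;> ring
      simp only [Matrix.mulVec, dotProduct, Matrix.of_apply, hterm,
        Finset.sum_sub_distrib, Finset.sum_ite_eq, Finset.mem_univ, if_true,
        Finset.sum_const, Finset.card_univ, Fintype.card_fin, nsmul_eq_mul]
      field_simp
      ring
    rw [hmv]
    simp only [dotProduct, one_mul, Finset.sum_const, Finset.card_univ, Fintype.card_fin,
      nsmul_eq_mul]
  clear_value s c
  clear hs_def hc_def
  -- abbreviate the target
  set Aex : ℝ := (1/2) * (1 + 1 / (M : ℝ)) - 1 / z with hA_def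
  set Bex : ℝ := (1/3) * (1 + 3 / (2 * (M : ℝ)) + 1 / (2 * (M : ℝ) ^ 2))
      - (1 / z) * (1 + 1 / (M : ℝ)) + 1 / z ^ 2 with hB_def
  have hsA : s = -((M:ℝ) * z) * Aex := by
    rw [hs, hA_def]; field_simp; ring
  have hcB : c = (M:ℝ) * z^2 * Bex := by
    rw [hc, hB_def]; field_simp; ring
  have hBpos : 0 < Bex := by
    have h1 : 0 < (M:ℝ) * z^2 := by positivity
    have h2 : 0 < (M:ℝ) * z^2 * Bex := hcB ▸ hcpos
    have h3 : Bex = ((M:ℝ) * z^2 * Bex) / ((M:ℝ) * z^2) := by field_simp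
    rw [h3]
    exact div_pos h2 h1
  have hBne : Bex ≠ 0 := ne_of_gt hBpos
  -- value of the limit
  have hval : (1:ℝ) - ζ i * Aex / Bex = 1 + z * ζ i * ((N:ℝ) * (s / (c*N + 0))) := by
    rw [hsA, hcB, add_zero]
    field_simp
    ring
  -- the limit of the simplified expression
  have hlim : Tendsto (fun δ : ℝ => 1 + z * ζ i * ((N:ℝ) * (s / (c*N + δ))))
      (nhdsWithin 0 (Set.Ioi 0)) (nhds (1 + z * ζ i * ((N:ℝ) * (s / (c*N + 0))))) := by
    apply Tendsto.mono_left _ nhdsWithin_le_nhds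
    have hden : c*(N:ℝ) + 0 ≠ 0 := by positivity
    have hcont : ContinuousAt (fun δ : ℝ => 1 + z * ζ i * ((N:ℝ) * (s / (c*N + δ)))) 0 := by
      apply ContinuousAt.add continuousAt_const
      apply ContinuousAt.mul continuousAt_const
      apply ContinuousAt.mul continuousAt_const
      exact ContinuousAt.div continuousAt_const (continuousAt_const.add continuousAt_id) hden
    exact hcont.tendsto
  rw [← hval] at hlim
  exact hlim.congr' (Filter.eventuallyEq_of_mem self_mem_nhdsWithin
    (fun δ hδ => (heq δ hδ).symm))
end

section
/- Let λ ∈ ℝ, u₀ ∈ ℝ, δ > 0, N, M ≥ 1, θ ∈ [0,1]^N, and let α : (0,∞) → [0,∞) satisfy α(h) → 0 as h → 0⁺. Set ζ_i = i/M, ξ_j = j/N, γ_{ji} = ζ_i − ξ_j, and for h > 0 define Φ_i(h) ∈ ℝ^N with entries exp(−α(h) θ_j γ_{ji}²), Ψ(h) ∈ ℝ^{N×M} with entries ψ_{ji}(h) = (1 − λh ζ_i − 2α(h) θ_j γ_{ji} ζ_i) exp(−α(h) θ_j γ_{ji}²), and the one-step PI-RPNN value û_h(c_i) = u₀ (1 +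 λ h ζ_i Φ_i(h)ᵀ (Ψ(h)Ψ(h)ᵀ + δ I_N)^{−1} Ψ(h) 𝟏_M) at the collocation point c_i = t₀ + h ζ_i. Let u(t) = u₀ e^{λ(t − t₀)} be the exact solution of u' = λu, u(t₀) = u₀, and set ℰ_i(h) = u(c_i) − û_h(c_i). Then for each i, lim_{h → 0⁺} ℰ_i(h)/h = λ ζ_i u₀ · δ/(MN + δ); in particular ℰ_i(h) → 0 as h → 0⁺ for every fixed δ > 0, and the limit λ ζ_i u₀ δ/(MN + δ) tends to 0 as δ → 0⁺ or as M → ∞ (consistency of the scheme in these limits). -/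
open Matrix Filter

/-- consistency: For the one-step multi-collocation PI-RPNN scheme with
Gaussian features (effective shape parameter `α(h) → 0` as `h → 0⁺`), collocation points
`cᵢ = t₀ + hζᵢ`, and exact solution `u(t) = u₀e^{λ(t−t₀)}`, the local error
`ℰᵢ(h) = u(cᵢ) − û_h(cᵢ)` satisfies `ℰᵢ(h)/h → λζᵢu₀·δ/(MN + δ)` as `h → 0⁺`; in
particular `ℰᵢ(h) → 0`, and the limit tends to `0` as `δ → 0⁺` or as `M → ∞`. -/
theorem stmt_13 (lam u0 : ℝ) (δ : ℝ) (hδ : 0 < δ)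
    (N M : ℕ) (hN : 1 ≤ N) (hM : 1 ≤ M)
    (θ : Fin N → ℝ) (hθ : ∀ j, θ j ∈ Set.Icc (0:ℝ) 1)
    (α : ℝ → ℝ) (hα_nonneg : ∀ h : ℝ, 0 < h → 0 ≤ α h)
    (hα_lim : Tendsto α (nhdsWithin 0 (Set.Ioi 0)) (nhds 0))
    (t₀ : ℝ) (i : Fin M) :
    let ζ : Fin M → ℝ := fun i' => ((i' : ℕ) + 1 : ℝ) / (M : ℝ)
    let ξ : Fin N → ℝ := fun j => ((j : ℕ) + 1 : ℝ) / (N : ℝ)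
    let γ : Fin N → Fin M → ℝ := fun j i' => ζ i' - ξ j
    let Φ : ℝ → (Fin N → ℝ) := fun h j => Real.exp (-(α h) * θ j * (γ j i) ^ 2)
    let Ψ : ℝ → Matrix (Fin N) (Fin M) ℝ := fun h => Matrix.of fun j i' =>
      (1 - lam * h * ζ i' - 2 * α h * θ j * γ j i' * ζ i') *
        Real.exp (-(α h) * θ j * (γ j i') ^ 2)
    let uhat : ℝ → ℝ := fun h =>
      u0 * (1 + lam * h * ζ i * (Φ h ⬝ᵥ
        ((Ψ h * (Ψ h)ᵀ + δ • (1 : Matrix (Fin N) (Fin N) ℝ))⁻¹).mulVec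
          ((Ψ h).mulVec (fun _ => 1))))
    let u : ℝ → ℝ := fun t => u0 * Real.exp (lam * (t - t₀))
    let E : ℝ → ℝ := fun h => u (t₀ + h * ζ i) - uhat h
    Tendsto (fun h => E h / h) (nhdsWithin 0 (Set.Ioi 0))
      (nhds (lam * ζ i * u0 * (δ / ((M : ℝ) * (N : ℝ) + δ)))) ∧
    Tendsto E (nhdsWithin 0 (Set.Ioi 0)) (nhds 0) ∧
    Tendsto (fun d : ℝ => lam * ζ i * u0 * (d / ((M : ℝ) * (N : ℝ) + d)))
      (nhdsWithin 0 (Set.Ioi 0)) (nhds 0) ∧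
    Tendsto (fun m : ℕ => lam * ζ i * u0 * (δ / ((m : ℝ) * (N : ℝ) + δ)))
      atTop (nhds 0) := by
  intro ζ ξ γ Φ Ψ uhat u E
  have hMpos : (0:ℝ) < (M:ℝ) := by exact_mod_cast Nat.lt_of_lt_of_le Nat.zero_lt_one hM
  have hNpos : (0:ℝ) < (N:ℝ) := by exact_mod_cast Nat.lt_of_lt_of_le Nat.zero_lt_one hN
  have hden : (M:ℝ) * (N:ℝ) + δ ≠ 0 :=
    (add_pos_of_nonneg_of_pos (by positivity) hδ).ne'
  set L := nhdsWithin (0:ℝ) (Set.Ioi 0) with hL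
  -- two-variable versions (h, a) with a in place of α h
  set Φ' : ℝ × ℝ → Fin N → ℝ := fun p j => Real.exp (-(p.2) * θ j * (γ j i) ^ 2) with hΦ'
  set Ψ' : ℝ × ℝ → Matrix (Fin N) (Fin M) ℝ := fun p => Matrix.of fun j i' =>
      (1 - lam * p.1 * ζ i' - 2 * p.2 * θ j * γ j i' * ζ i') *
        Real.exp (-(p.2) * θ j * (γ j i') ^ 2) with hΨ'
  set A : ℝ × ℝ → Matrix (Fin N) (Fin N) ℝ :=
      fun p => Ψ' p * (Ψ' p)ᵀ + δ • (1 : Matrix (Fin N) (Fin N) ℝ) with hA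
  set q : ℝ × ℝ → ℝ :=
      fun p => Φ' p ⬝ᵥ ((A p).adjugate).mulVec ((Ψ' p).mulVec (fun _ => 1)) with hq
  set d : ℝ × ℝ → ℝ := fun p => (A p).det with hd
  have key : ∀ p : ℝ × ℝ,
      Φ' p ⬝ᵥ ((A p)⁻¹).mulVec ((Ψ' p).mulVec (fun _ => 1)) = (d p)⁻¹ * q p := by
    intro p
    rw [Matrix.inv_def, Ring.inverse_eq_inv, Matrix.smul_mulVec, dotProduct_smul,
      smul_eq_mul, hq, hd]
  -- continuity
  have hΦc : Continuous Φ' := by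
    refine continuous_pi fun j => Real.continuous_exp.comp ?_
    fun_prop
  have hΨc : Continuous Ψ' := by
    refine continuous_matrix fun j i' => ?_
    simp only [hΨ', Matrix.of_apply]
    exact Continuous.mul (by fun_prop) (Real.continuous_exp.comp (by fun_prop))
  have hAc : Continuous A := (hΨc.matrix_mul hΨc.matrix_transpose).add continuous_const
  have hqc : Continuous q :=
    hΦc.dotProduct ((hAc.matrix_adjugate).matrix_mulVec
      (hΨc.matrix_mulVec continuous_const))
  have hdc : Continuous d := hAc.matrix_det
  -- values at (0,0)
  set p₀ : ℝ × ℝ := (0, 0) with hp₀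
  have hΦ0 : Φ' p₀ = fun _ => 1 := by funext j; simp [hΦ', hp₀]
  have hΨ0 : Ψ' p₀ = Matrix.of fun _ _ => (1:ℝ) := by
    ext j i'; simp [hΨ', hp₀]
  have hA0pd : (A p₀).PosDef := by
    have h1 : (Ψ' p₀ * (Ψ' p₀)ᵀ).PosSemidef := by
      rw [← Matrix.conjTranspose_eq_transpose_of_trivial]
      exact Matrix.posSemidef_self_mul_conjTranspose (Ψ' p₀)
    have h2 : (δ • (1 : Matrix (Fin N) (Fin N) ℝ)).PosDef := by
      rw [Matrix.smul_one_eq_diagonal]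
      exact Matrix.posDef_diagonal_iff.mpr fun _ => hδ
    exact Matrix.PosDef.posSemidef_add h1 h2
  have hdet0 : d p₀ ≠ 0 := hA0pd.det_pos.ne'
  have hΨ0v : (Ψ' p₀).mulVec (fun _ => (1:ℝ)) = fun _ => (M:ℝ) := by
    funext j; simp [hΨ0, Matrix.mulVec, dotProduct]
  have hA0v : (A p₀).mulVec (fun _ => (M:ℝ) / ((M:ℝ) * (N:ℝ) + δ)) = fun _ => (M:ℝ) := by
    funext j
    simp only [hA, hΨ0, Matrix.mulVec, dotProduct, Matrix.add_apply,
      Matrix.mul_apply, Matrix.transpose_apply, Matrix.of_apply, one_mul, Matrix.smul_apply, Matrix.one_apply,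
      smul_eq_mul, Finset.sum_const, Finset.card_univ, Fintype.card_fin, nsmul_eq_mul,
      add_mul, Finset.sum_add_distrib, mul_ite, mul_one, mul_zero, Finset.sum_ite_eq,
      Finset.mem_univ, if_true, ite_mul, zero_mul]
    field_simp
  have hinvv : ((A p₀)⁻¹).mulVec (fun _ => (M:ℝ)) =
      fun _ => (M:ℝ) / ((M:ℝ) * (N:ℝ) + δ) := by
    rw [← hA0v, Matrix.mulVec_mulVec, Matrix.nonsing_inv_mul _ hA0pd.det_pos.ne'.isUnit,
      Matrix.one_mulVec]
  have hQ0 : (d p₀)⁻¹ * q p₀ = (M:ℝ) * (N:ℝ) / ((M:ℝ) * (N:ℝ) + δ) := by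
    rw [← key p₀, hΨ0v, hinvv, hΦ0]
    simp only [dotProduct, one_mul, Finset.sum_const, Finset.card_univ,
      Fintype.card_fin, nsmul_eq_mul]
    field_simp
  -- limit of Q
  set Q : ℝ → ℝ := fun h => Φ h ⬝ᵥ
      ((Ψ h * (Ψ h)ᵀ + δ • (1 : Matrix (Fin N) (Fin N) ℝ))⁻¹).mulVec
        ((Ψ h).mulVec (fun _ => 1)) with hQ
  have hP : Tendsto (fun h : ℝ => (h, α h)) L (nhds p₀) :=
    (tendsto_id.mono_right nhdsWithin_le_nhds).prodMk_nhds hα_lim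
  have hQlim : Tendsto Q L (nhds ((M:ℝ) * (N:ℝ) / ((M:ℝ) * (N:ℝ) + δ))) := by
    have hg : Tendsto (fun p => (d p)⁻¹ * q p) (nhds p₀) (nhds ((d p₀)⁻¹ * q p₀)) :=
      ((hdc.tendsto p₀).inv₀ hdet0).mul (hqc.tendsto p₀)
    have hcomp := hg.comp hP
    rw [hQ0] at hcomp
    refine hcomp.congr fun h => ?_
    exact (key (h, α h)).symm
  -- exponential slope limit
  have hder : HasDerivAt (fun h : ℝ => Real.exp (lam * ζ i * h)) (lam * ζ i) 0 := by
    simpa using ((hasDerivAt_id (0:ℝ)).const_mul (lam * ζ i)).exp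
  have hexp : Tendsto (fun h : ℝ => (Real.exp (lam * ζ i * h) - 1) / h) L
      (nhds (lam * ζ i)) := by
    have hsub : L ≤ nhdsWithin (0:ℝ) {(0:ℝ)}ᶜ :=
      nhdsWithin_mono 0 fun x hx => ne_of_gt hx
    refine ((hasDerivAt_iff_tendsto_slope.mp hder).mono_left hsub).congr fun h => ?_
    simp [slope_def_field]
  -- identify E h / h
  have hE : ∀ h : ℝ, E h =
      u0 * Real.exp (lam * (t₀ + h * ζ i - t₀)) - u0 * (1 + lam * h * ζ i * Q h) :=
    fun h => rfl
  have he : ∀ h ∈ Set.Ioi (0:ℝ),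
      u0 * ((Real.exp (lam * ζ i * h) - 1) / h) - u0 * (lam * ζ i) * Q h = E h / h := by
    intro h hh
    have hne : h ≠ 0 := ne_of_gt hh
    have harg : lam * (t₀ + h * ζ i - t₀) = lam * ζ i * h := by ring
    rw [hE h, harg]
    field_simp
    ring
  have hcomb : Tendsto (fun h => u0 * ((Real.exp (lam * ζ i * h) - 1) / h)
      - u0 * (lam * ζ i) * Q h) L
      (nhds (u0 * (lam * ζ i) - u0 * (lam * ζ i) * ((M:ℝ) * (N:ℝ) / ((M:ℝ) * (N:ℝ) + δ)))) :=
    (hexp.const_mul u0).sub (hQlim.const_mul _)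
  have hval : u0 * (lam * ζ i) - u0 * (lam * ζ i) * ((M:ℝ) * (N:ℝ) / ((M:ℝ) * (N:ℝ) + δ))
      = lam * ζ i * u0 * (δ / ((M:ℝ) * (N:ℝ) + δ)) := by
    field_simp
    ring
  rw [hval] at hcomb
  have part1 : Tendsto (fun h => E h / h) L
      (nhds (lam * ζ i * u0 * (δ / ((M:ℝ) * (N:ℝ) + δ)))) := by
    refine hcomb.congr' ?_
    exact eventually_nhdsWithin_of_forall he
  refine ⟨part1, ?_, ?_, ?_⟩
  · -- E → 0
    have h2 := part1.mul
      ((tendsto_id.mono_right nhdsWithin_le_nhds : Tendsto (fun h : ℝ => h) L (nhds 0)))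
    rw [mul_zero] at h2
    refine h2.congr' (eventually_nhdsWithin_of_forall fun h hh => ?_)
    exact div_mul_cancel₀ (E h) (ne_of_gt hh)
  · -- δ → 0⁺ limit
    have h3 : Tendsto (fun d' : ℝ => lam * ζ i * u0 * (d' / ((M:ℝ) * (N:ℝ) + d')))
        (nhds 0) (nhds (lam * ζ i * u0 * (0 / ((M:ℝ) * (N:ℝ) + 0)))) := by
      refine Tendsto.const_mul _ (Tendsto.div tendsto_id
        (tendsto_const_nhds.add tendsto_id) ?_)
      simpa using (by positivity : (0:ℝ) < (M:ℝ) * (N:ℝ)).ne'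
    simpa using h3.mono_left nhdsWithin_le_nhds
  · -- M → ∞ limit
    have h4 : Tendsto (fun m : ℕ => (m:ℝ) * (N:ℝ) + δ) atTop atTop :=
      tendsto_atTop_add_const_right atTop δ
        (tendsto_natCast_atTop_atTop.atTop_mul_const hNpos)
    have h5 : Tendsto (fun m : ℕ => δ / ((m:ℝ) * (N:ℝ) + δ)) atTop (nhds 0) :=
      Tendsto.div_atTop tendsto_const_nhds h4
    simpa using h5.const_mul (lam * ζ i * u0)
end

section
/- Let d ≥ 1, M ≥ 1, h > 0, let P ∈ ℝ^{d×d} be invertible and λ₁, …, λ_d < 0. For each j define s_j = 1/(|λ_j| h) and σ_j = 1 − ( ½(1 + 1/M) + s_j ) / ( (1/3)(1 + 3/(2M) + 1/(2M²)) + s_j(1 + 1/M) + s_j² ). Then |σ_j| < 1 for every j, and for every initial vector û₀ ∈ ℝ^d the iteration û_{ℓ+1} = P · diag(σ₁, …, σ_d) · P^{−1} û_ℓ converges to 0 as ℓ → ∞. -/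
open Matrix Filter

/-- For a diagonalizable system with negative eigenvalues
`λ₁,…,λ_d < 0`, step size `h > 0` and `sⱼ = 1/(|λⱼ|h)`, the limiting stability indices
`σⱼ = 1 − (½(1+1/M)+sⱼ)/((1/3)(1+3/(2M)+1/(2M²))+sⱼ(1+1/M)+sⱼ²)` satisfy `|σⱼ| < 1`,
and the iteration `û_{ℓ+1} = P·diag(σ)·P⁻¹·û_ℓ` converges to `0`. -/
theorem stmt_14 (d M : ℕ) (hd : 1 ≤ d) (hM : 1 ≤ M) (h : ℝ) (hh : 0 < h)
    (P : Matrix (Fin d) (Fin d) ℝ) (hP : IsUnit P.det)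
    (lam : Fin d → ℝ) (hlam : ∀ j, lam j < 0) :
    let s : Fin d → ℝ := fun j => 1 / (|lam j| * h)
    let σ : Fin d → ℝ := fun j =>
      1 - ((1/2) * (1 + 1 / (M : ℝ)) + s j) /
        ((1/3) * (1 + 3 / (2 * (M : ℝ)) + 1 / (2 * (M : ℝ) ^ 2))
          + s j * (1 + 1 / (M : ℝ)) + (s j) ^ 2)
    (∀ j, |σ j| < 1) ∧
    ∀ u0 : Fin d → ℝ,
      Tendsto (fun ℓ : ℕ => ((P * Matrix.diagonal σ * P⁻¹) ^ ℓ).mulVec u0)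
        atTop (nhds 0) := by
  intro s σ
  have hM1 : (1:ℝ) ≤ (M:ℝ) := by exact_mod_cast hM
  have hM0 : (0:ℝ) < (M:ℝ) := lt_of_lt_of_le one_pos hM1
  have hs0 : ∀ j, 0 < s j := by
    intro j
    have : 0 < |lam j| := abs_pos.mpr (hlam j).ne
    exact div_pos one_pos (mul_pos this hh)
  have hσ : ∀ j, |σ j| < 1 := by
    intro j
    set sj := s j with hsj
    have hsj0 : 0 < sj := hs0 j
    have hm0 : 0 < 1 / (M:ℝ) := by positivity
    set m := 1 / (M:ℝ) with hmdef
    have e1 : 3 / (2 * (M:ℝ)) = (3/2) * m := by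
      rw [hmdef]; field_simp
    have e2 : 1 / (2 * (M:ℝ)^2) = (1/2) * m^2 := by
      rw [hmdef]; field_simp
    have hD : 0 < (1/3) * (1 + 3 / (2 * (M : ℝ)) + 1 / (2 * (M : ℝ) ^ 2))
          + sj * (1 + 1 / (M : ℝ)) + sj ^ 2 := by
      rw [e1, e2]
      nlinarith [sq_nonneg sj, sq_nonneg m, mul_pos hsj0 hm0]
    have hN : 0 < (1/2) * (1 + 1 / (M : ℝ)) + sj := by positivity
    rw [abs_lt]
    constructor
    · have h2 : ((1/2) * (1 + 1 / (M : ℝ)) + sj) /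
        ((1/3) * (1 + 3 / (2 * (M : ℝ)) + 1 / (2 * (M : ℝ) ^ 2))
          + sj * (1 + 1 / (M : ℝ)) + sj ^ 2) < 2 := by
        rw [div_lt_iff₀ hD]
        rw [e1, e2]
        nlinarith [sq_nonneg sj, sq_nonneg m, mul_pos hsj0 hm0]
      simp only [σ]
      linarith
    · have h2 : 0 < ((1/2) * (1 + 1 / (M : ℝ)) + sj) /
        ((1/3) * (1 + 3 / (2 * (M : ℝ)) + 1 / (2 * (M : ℝ) ^ 2))
          + sj * (1 + 1 / (M : ℝ)) + sj ^ 2) := div_pos hN hD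
      simp only [σ]
      linarith
  refine ⟨hσ, ?_⟩
  intro u0
  have key : ∀ ℓ : ℕ, (P * Matrix.diagonal σ * P⁻¹) ^ ℓ
      = P * Matrix.diagonal (fun j => σ j ^ ℓ) * P⁻¹ := by
    intro ℓ
    induction ℓ with
    | zero => simp [Matrix.mul_nonsing_inv P hP]
    | succ n ih =>
        rw [pow_succ, ih]
        rw [Matrix.mul_assoc (P * Matrix.diagonal (fun j => σ j ^ n)) P⁻¹,
          Matrix.mul_assoc P (Matrix.diagonal σ) P⁻¹,
          ← Matrix.mul_assoc P⁻¹ P, Matrix.nonsing_inv_mul P hP, Matrix.one_mul,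
          ← Matrix.mul_assoc, Matrix.mul_assoc P, Matrix.diagonal_mul_diagonal]
        simp [pow_succ]
  have heq : ∀ ℓ : ℕ, ((P * Matrix.diagonal σ * P⁻¹) ^ ℓ).mulVec u0
      = P.mulVec (fun j => σ j ^ ℓ * (P⁻¹.mulVec u0) j) := by
    intro ℓ
    rw [key ℓ, ← Matrix.mulVec_mulVec, ← Matrix.mulVec_mulVec]
    have hdiag : (Matrix.diagonal fun j => σ j ^ ℓ) *ᵥ (P⁻¹ *ᵥ u0)
        = fun j => σ j ^ ℓ * (P⁻¹ *ᵥ u0) j := by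
      funext j
      exact Matrix.mulVec_diagonal _ _ _
    rw [hdiag]
  have h1 : Tendsto (fun ℓ : ℕ => fun j => σ j ^ ℓ * (P⁻¹.mulVec u0) j)
      atTop (nhds 0) := by
    rw [tendsto_pi_nhds]
    intro j
    have := (tendsto_pow_atTop_nhds_zero_of_abs_lt_one (hσ j)).mul_const
      ((P⁻¹.mulVec u0) j)
    simpa using this
  have hcont : Continuous (fun v : Fin d → ℝ => P.mulVec v) :=
    LinearMap.continuous_of_finiteDimensional (Matrix.mulVecLin P)
  have := (hcont.tendsto 0).comp h1
  simp only [Function.comp_def, Matrix.mulVec_zero] at this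
  simpa only [heq] using this
end

section
/- Let m ≥ 1, 0 ≤ ρ < 1 and C ≥ 0, and let (A_i)_{i ≥ 1} be a sequence of upper triangular matrices in ℝ^{m×m} such that |(A_i)_{jj}| ≤ ρ for all i and all j, and |(A_i)_{jk}| ≤ C for all i, j, k. Then the products A_i A_{i−1} ⋯ A_1 converge to the zero matrix as i → ∞; in particular, for every y₀ ∈ ℝ^m, the sequence y_i = A_i A_{i−1} ⋯ A_1 y₀ converges to 0. -/
open Matrix Filter

/-- If `(A_i)_{i≥1}` are upper triangular `m×m` matrices with diagonal
entries bounded by `ρ < 1` in absolute value and all entries bounded by `C`, then the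
products `A_i⋯A_1` converge to the zero matrix, and `y_i = A_i⋯A_1 y₀ → 0` for every
`y₀`. -/
theorem stmt_15 (m : ℕ) (hm : 1 ≤ m) (ρ C : ℝ) (hρ0 : 0 ≤ ρ) (hρ1 : ρ < 1)
    (hC : 0 ≤ C) (A : ℕ → Matrix (Fin m) (Fin m) ℝ)
    (hupper : ∀ i : ℕ, 1 ≤ i → ∀ j k : Fin m, k < j → A i j k = 0)
    (hdiag : ∀ i : ℕ, 1 ≤ i → ∀ j : Fin m, |A i j j| ≤ ρ)
    (hbound : ∀ i : ℕ, 1 ≤ i → ∀ j k : Fin m, |A i j k| ≤ C) :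
    let prod : ℕ → Matrix (Fin m) (Fin m) ℝ := fun n =>
      Nat.rec (1 : Matrix (Fin m) (Fin m) ℝ) (fun k Pk => A (k + 1) * Pk) n
    Tendsto prod atTop (nhds 0) ∧
    ∀ y0 : Fin m → ℝ, Tendsto (fun n => (prod n).mulVec y0) atTop (nhds 0) := by
  intro prod
  -- choose ε and r
  set ε : ℝ := min 1 ((1 - ρ) / (2 * (m * C + 1))) with hε_def
  set r : ℝ := (1 + ρ) / 2 with hr_def
  have hmC1 : (0:ℝ) < m * C + 1 := by positivity
  have hε0 : 0 < ε := by
    apply lt_min one_pos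
    apply div_pos (by linarith) (by linarith)
  have hε1 : ε ≤ 1 := min_le_left _ _
  have hr0 : 0 ≤ r := by rw [hr_def]; linarith
  have hr1 : r < 1 := by rw [hr_def]; linarith
  have hkey : ρ + m * C * ε ≤ r := by
    have h1 : ε ≤ (1 - ρ) / (2 * (m * C + 1)) := min_le_right _ _
    have h2 : m * C * ε ≤ m * C * ((1 - ρ) / (2 * (m * C + 1))) := by
      apply mul_le_mul_of_nonneg_left h1 (by positivity)
    have hfrac : (m:ℝ) * C / (m * C + 1) ≤ 1 := (div_le_one hmC1).mpr (by linarith)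
    have heq : (m:ℝ) * C * ((1 - ρ) / (2 * (m * C + 1)))
        = (1 - ρ) / 2 * ((m:ℝ) * C / (m * C + 1)) := by field_simp
    have h3 : m * C * ((1 - ρ) / (2 * (m * C + 1))) ≤ (1 - ρ) / 2 := by
      rw [heq]
      calc (1 - ρ) / 2 * ((m:ℝ) * C / (m * C + 1)) ≤ (1 - ρ) / 2 * 1 :=
            mul_le_mul_of_nonneg_left hfrac (by linarith)
        _ = (1 - ρ) / 2 := mul_one _
    rw [hr_def]; linarith
  -- main entrywise estimate
  have main : ∀ n : ℕ, ∀ j k : Fin m,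
      (k < j → prod n j k = 0) ∧ ε ^ (k : ℕ) * |prod n j k| ≤ ε ^ (j : ℕ) * r ^ n := by
    intro n
    induction n with
    | zero =>
      intro j k
      constructor
      · intro hkj
        have : prod 0 j k = (1 : Matrix (Fin m) (Fin m) ℝ) j k := rfl
        rw [this, Matrix.one_apply_ne (by exact fun h => absurd h (by rintro rfl; exact lt_irrefl _ hkj))]
      · have h1 : prod 0 j k = (1 : Matrix (Fin m) (Fin m) ℝ) j k := rfl
        by_cases hjk : j = k
        · subst hjk
          rw [h1, Matrix.one_apply_eq]
          simp
        · rw [h1, Matrix.one_apply_ne hjk]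
          simp [pow_nonneg hε0.le]
    | succ n ih =>
      intro j k
      have hProd : prod (n + 1) = A (n + 1) * prod n := rfl
      have htri : ∀ l : Fin m, k < j → A (n + 1) j l * prod n l k = 0 := by
        intro l hkj
        rcases lt_or_ge l j with hl | hl
        · rw [hupper (n + 1) (Nat.le_add_left 1 n) j l hl, zero_mul]
        · have : k < l := lt_of_lt_of_le hkj hl
          rw [(ih l k).1 this, mul_zero]
      constructor
      · intro hkj
        rw [hProd, Matrix.mul_apply]
        exact Finset.sum_eq_zero fun l _ => htri l hkj
      · rw [hProd, Matrix.mul_apply]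
        have hεk : (0:ℝ) ≤ ε ^ (k : ℕ) := pow_nonneg hε0.le _
        calc ε ^ (k : ℕ) * |∑ l, A (n + 1) j l * prod n l k|
            ≤ ε ^ (k : ℕ) * ∑ l, |A (n + 1) j l * prod n l k| := by
              apply mul_le_mul_of_nonneg_left (Finset.abs_sum_le_sum_abs _ _) hεk
          _ = ∑ l, |A (n + 1) j l| * (ε ^ (k : ℕ) * |prod n l k|) := by
              rw [Finset.mul_sum]
              apply Finset.sum_congr rfl
              intro l _
              rw [abs_mul]; ring
          _ ≤ ∑ l, |A (n + 1) j l| * (ε ^ (l : ℕ) * r ^ n) := by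
              apply Finset.sum_le_sum
              intro l _
              exact mul_le_mul_of_nonneg_left (ih l k).2 (abs_nonneg _)
          _ ≤ ∑ l : Fin m, (if l = j then ρ * ε ^ (j : ℕ) * r ^ n
                else C * ε * ε ^ (j : ℕ) * r ^ n) := by
              apply Finset.sum_le_sum
              intro l _
              by_cases hlj : l = j
              · subst hlj
                simp only [if_pos rfl]
                have := hdiag (n + 1) (Nat.le_add_left 1 n) l
                have hrn : (0:ℝ) ≤ ε ^ (l : ℕ) * r ^ n := by positivity
                calc |A (n + 1) l l| * (ε ^ (l : ℕ) * r ^ n)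
                    ≤ ρ * (ε ^ (l : ℕ) * r ^ n) := mul_le_mul_of_nonneg_right this hrn
                  _ = ρ * ε ^ (l : ℕ) * r ^ n := by ring
              · simp only [if_neg hlj]
                rcases lt_or_ge l j with hl | hl
                · rw [hupper (n + 1) (Nat.le_add_left 1 n) j l hl]
                  simp only [abs_zero, zero_mul]
                  positivity
                · have hjl : j < l := lt_of_le_of_ne hl (by exact fun h => hlj h.symm)
                  have hjl' : (j : ℕ) + 1 ≤ (l : ℕ) := hjl
                  have hεl : ε ^ (l : ℕ) ≤ ε ^ ((j : ℕ) + 1) :=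
                    pow_le_pow_of_le_one hε0.le hε1 hjl'
                  have hrn : (0:ℝ) ≤ r ^ n := pow_nonneg hr0 _
                  have hA : |A (n + 1) j l| ≤ C := hbound (n + 1) (Nat.le_add_left 1 n) j l
                  calc |A (n + 1) j l| * (ε ^ (l : ℕ) * r ^ n)
                      ≤ C * (ε ^ ((j : ℕ) + 1) * r ^ n) := by
                        apply mul_le_mul hA (mul_le_mul_of_nonneg_right hεl hrn)
                          (by positivity) hC
                    _ = C * ε * ε ^ (j : ℕ) * r ^ n := by ring
          _ ≤ ε ^ (j : ℕ) * r ^ (n + 1) := by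
              have hb : (0:ℝ) ≤ C * ε * ε ^ (j : ℕ) * r ^ n := by positivity
              have hsum : ∑ l : Fin m, (if l = j then ρ * ε ^ (j : ℕ) * r ^ n
                  else C * ε * ε ^ (j : ℕ) * r ^ n)
                  = ρ * ε ^ (j : ℕ) * r ^ n + ((m : ℝ) - 1) * (C * ε * ε ^ (j : ℕ) * r ^ n) := by
                have : ∀ l : Fin m, (if l = j then ρ * ε ^ (j : ℕ) * r ^ n
                    else C * ε * ε ^ (j : ℕ) * r ^ n)
                    = C * ε * ε ^ (j : ℕ) * r ^ n + (if l = j then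
                      ρ * ε ^ (j : ℕ) * r ^ n - C * ε * ε ^ (j : ℕ) * r ^ n else 0) := by
                  intro l; by_cases h : l = j <;> simp [h]
                rw [Finset.sum_congr rfl (fun l _ => this l), Finset.sum_add_distrib,
                  Finset.sum_const, Finset.sum_ite_eq' Finset.univ j
                    (fun _ => ρ * ε ^ (j : ℕ) * r ^ n - C * ε * ε ^ (j : ℕ) * r ^ n),
                  if_pos (Finset.mem_univ j)]
                simp [Finset.card_univ]
                ring
              rw [hsum, pow_succ]
              have hεj : (0:ℝ) ≤ ε ^ (j : ℕ) := pow_nonneg hε0.le _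
              have hrn : (0:ℝ) ≤ r ^ n := pow_nonneg hr0 _
              have h1 : ((m : ℝ) - 1) * (C * ε * ε ^ (j : ℕ) * r ^ n)
                  ≤ (m : ℝ) * (C * ε * ε ^ (j : ℕ) * r ^ n) := by
                apply mul_le_mul_of_nonneg_right (by linarith) hb
              have h2 : ρ * ε ^ (j : ℕ) * r ^ n + (m : ℝ) * (C * ε * ε ^ (j : ℕ) * r ^ n)
                  = (ρ + (m : ℝ) * C * ε) * (ε ^ (j : ℕ) * r ^ n) := by ring
              have h3 : (ρ + (m : ℝ) * C * ε) * (ε ^ (j : ℕ) * r ^ n)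
                  ≤ r * (ε ^ (j : ℕ) * r ^ n) := by
                apply mul_le_mul_of_nonneg_right hkey (by positivity)
              calc ρ * ε ^ (j : ℕ) * r ^ n + ((m : ℝ) - 1) * (C * ε * ε ^ (j : ℕ) * r ^ n)
                  ≤ (ρ + (m : ℝ) * C * ε) * (ε ^ (j : ℕ) * r ^ n) := by linarith
                _ ≤ r * (ε ^ (j : ℕ) * r ^ n) := h3
                _ = ε ^ (j : ℕ) * (r ^ n * r) := by ring
  -- entrywise bound
  have hbd : ∀ n : ℕ, ∀ j k : Fin m, |prod n j k| ≤ (ε ^ m)⁻¹ * r ^ n := by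
    intro n j k
    have h := (main n j k).2
    have hεk : (0:ℝ) < ε ^ (k : ℕ) := pow_pos hε0 _
    have hεm : (0:ℝ) < ε ^ m := pow_pos hε0 _
    have hεmk : ε ^ m ≤ ε ^ (k : ℕ) := pow_le_pow_of_le_one hε0.le hε1 k.2.le
    have hεj : ε ^ (j : ℕ) ≤ 1 := pow_le_one₀ hε0.le hε1
    have hrn : (0:ℝ) ≤ r ^ n := pow_nonneg hr0 _
    have h2 : ε ^ m * |prod n j k| ≤ r ^ n := by
      calc ε ^ m * |prod n j k| ≤ ε ^ (k : ℕ) * |prod n j k| :=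
            mul_le_mul_of_nonneg_right hεmk (abs_nonneg _)
        _ ≤ ε ^ (j : ℕ) * r ^ n := h
        _ ≤ 1 * r ^ n := mul_le_mul_of_nonneg_right hεj hrn
        _ = r ^ n := one_mul _
    rw [inv_mul_eq_div, le_div_iff₀ hεm]
    linarith [h2]
  have htendsto : Tendsto prod atTop (nhds 0) := by
    have hgeo : Tendsto (fun n : ℕ => (ε ^ m)⁻¹ * r ^ n) atTop (nhds 0) := by
      have := tendsto_pow_atTop_nhds_zero_of_lt_one hr0 hr1
      simpa using this.const_mul (ε ^ m)⁻¹
    rw [show Tendsto prod atTop (nhds 0) ↔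
        Tendsto (fun n => (prod n : Fin m → Fin m → ℝ)) atTop
          (nhds (0 : Fin m → Fin m → ℝ)) from Iff.rfl]
    refine tendsto_pi_nhds.mpr ?_
    intro j
    rw [tendsto_pi_nhds]
    intro k
    have : ∀ n, |prod n j k - 0| ≤ (ε ^ m)⁻¹ * r ^ n := by
      intro n; rw [sub_zero]; exact hbd n j k
    apply squeeze_zero_norm (fun n => by simpa using this n) hgeo
  refine ⟨htendsto, fun y0 => ?_⟩
  have hcont : Continuous fun M : Matrix (Fin m) (Fin m) ℝ => M.mulVec y0 :=
    continuous_id.matrix_mulVec continuous_const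
  have := (hcont.tendsto 0).comp htendsto
  simpa [Matrix.zero_mulVec, Function.comp_def] using this
end
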